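/- Let B(z) = ((2z²/√10 − √10·z/2)/(2−z), (z²/√10)/(2−z)) for z ∈ 𝔻. Then ‖B(z)‖² = |b_1(z)|² + |b_2(z)|² ≤ 1 for all z ∈ 𝔻, and B(0) = 0; moreover 1 − ⟨B(z), B(w)⟩ = (1 − z·conj(w))·K_w(z) where K_w(z) is the kernel (1 − (z conj(w))((1/2) z conj(w) − z − conj(w) + 5/2)/((2−z)(2−conj(w))))/(1 − z conj(w)). -/

import Mathlib

open Complex

noncomputable def b1 (z : ℂ) : ℂ :=
  (2 * z ^ 2 / (Real.sqrt 10 : ℂ) - (Real.sqrt 10 : ℂ) * z / 2) / (2 - z)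

noncomputable def b2 (z : ℂ) : ℂ := (z ^ 2 / (Real.sqrt 10 : ℂ)) / (2 - z)

/-- The reproducing kernel of `𝒟(δ₁ + δ₀)`. -/
noncomputable def Kker (w z : ℂ) : ℂ :=
  (1 - (z * (starRingEnd ℂ) w) *
      ((1 / 2) * z * (starRingEnd ℂ) w - z - (starRingEnd ℂ) w + 5 / 2) /
      ((2 - z) * (2 - (starRingEnd ℂ) w))) / (1 - z * (starRingEnd ℂ) w)

lemma hss : ((Real.sqrt 10 : ℝ) : ℂ) ^ 2 = 10 := by
  rw [← Complex.ofReal_pow, Real.sq_sqrt (by norm_num)]; norm_num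

lemma hsne : ((Real.sqrt 10 : ℝ) : ℂ) ≠ 0 := by
  simp [Real.sqrt_eq_zero']

lemma two_sub_ne (z : ℂ) (hz : ‖z‖ < 1) : (2 : ℂ) - z ≠ 0 := by
  intro h
  have : z = 2 := by linear_combination -h
  rw [this] at hz; norm_num at hz

lemma b1_eq (z : ℂ) (hz : ‖z‖ < 1) :
    b1 z = z * (2 * z - 5) / (((Real.sqrt 10 : ℝ) : ℂ) * (2 - z)) := by
  have h2 := two_sub_ne z hz
  rw [b1]
  field_simp
  linear_combination (z * (2 - z) + (1 + ((Real.sqrt 10 : ℝ) : ℂ)) * z * (z - 2)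
    + (-z + 2 * z * ((Real.sqrt 10 : ℝ) : ℂ) - z ^ 2 * ((Real.sqrt 10 : ℝ) : ℂ))) * hss

lemma normsq_eq (u : ℂ) : ‖u‖ ^ 2 = u.re ^ 2 + u.im ^ 2 := by
  rw [Complex.sq_norm, Complex.normSq_apply]; ring

lemma part1 (z : ℂ) (hz : ‖z‖ < 1) : ‖b1 z‖ ^ 2 + ‖b2 z‖ ^ 2 ≤ 1 := by
  have h2 := two_sub_ne z hz
  have hD : 0 < ‖(2 : ℂ) - z‖ ^ 2 := pow_pos (norm_pos_iff.mpr h2) 2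
  have hsq : Real.sqrt 10 ^ 2 = 10 := Real.sq_sqrt (by norm_num)
  have e1 : ‖b1 z‖ ^ 2 = ‖z‖ ^ 2 * ‖2 * z - 5‖ ^ 2 / (10 * ‖(2 : ℂ) - z‖ ^ 2) := by
    rw [b1_eq z hz, norm_div, norm_mul, norm_mul, Complex.norm_real, Real.norm_eq_abs,
      _root_.abs_of_nonneg (Real.sqrt_nonneg 10)]
    rw [div_pow, mul_pow, mul_pow, hsq]
  have e2 : ‖b2 z‖ ^ 2 = ‖z‖ ^ 2 * ‖z‖ ^ 2 / (10 * ‖(2 : ℂ) - z‖ ^ 2) := by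
    rw [b2, norm_div, norm_div, Complex.norm_real, Real.norm_eq_abs,
      _root_.abs_of_nonneg (Real.sqrt_nonneg 10), div_pow, div_pow, hsq, norm_pow]
    ring
  rw [e1, e2, ← add_div, div_le_one (by positivity)]
  have h1 : ‖z‖ ^ 2 < 1 := by nlinarith [norm_nonneg z]
  rw [normsq_eq] at h1
  simp only [normsq_eq, Complex.sub_re, Complex.sub_im, Complex.mul_re, Complex.mul_im,
    Complex.re_ofNat, Complex.im_ofNat]
  set x := z.re; set y := z.im
  ring_nf
  nlinarith [sq_nonneg y, sq_nonneg (x-1), sq_nonneg (x+1), sq_nonneg (x^2+y^2-1),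
    mul_nonneg (sq_nonneg y) (sq_nonneg (x-1)), sq_nonneg (x*y), sq_nonneg (x^2+y^2-x)]

lemma b1_conj (w : ℂ) (hw : ‖w‖ < 1) :
    (starRingEnd ℂ) (b1 w) = (starRingEnd ℂ) w * (2 * (starRingEnd ℂ) w - 5) /
      (((Real.sqrt 10 : ℝ) : ℂ) * (2 - (starRingEnd ℂ) w)) := by
  rw [b1_eq w hw, map_div₀, map_mul, map_mul, map_sub, map_mul, Complex.conj_ofReal,
    map_sub, map_ofNat, map_ofNat]

lemma b2_conj (w : ℂ) :
    (starRingEnd ℂ) (b2 w) = ((starRingEnd ℂ) w) ^ 2 /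
      (((Real.sqrt 10 : ℝ) : ℂ) * (2 - (starRingEnd ℂ) w)) := by
  rw [b2, map_div₀, map_div₀, map_pow, map_sub, map_ofNat, Complex.conj_ofReal, div_div]

lemma part3 (z w : ℂ) (hz : ‖z‖ < 1) (hw : ‖w‖ < 1) :
    1 - (b1 z * (starRingEnd ℂ) (b1 w) + b2 z * (starRingEnd ℂ) (b2 w))
      = (1 - z * (starRingEnd ℂ) w) * Kker w z := by
  set u := (starRingEnd ℂ) w with hu
  have hz2 : (2 : ℂ) - z ≠ 0 := two_sub_ne z hz
  have hu2 : (2 : ℂ) - u ≠ 0 := two_sub_ne u (by rwa [hu, RCLike.norm_conj])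
  have h1 : (1 : ℂ) - z * u ≠ 0 := by
    intro h
    have : z * u = 1 := by linear_combination -h
    have := congrArg norm this
    rw [norm_mul, hu, RCLike.norm_conj, norm_one] at this
    nlinarith [norm_nonneg z, norm_nonneg w]
  rw [b1_eq z hz, b2, b1_conj w hw, b2_conj w, Kker, ← hu]
  field_simp
  linear_combination (20*z*u - 18*z*u^2 + 4*z*u^3 - 18*z^2*u - 3*z^2*u^2 + 14*z^2*u^3
    - 4*z^2*u^4 + 4*z^3*u + 14*z^3*u^2 - 16*z^3*u^3 + 4*z^3*u^4 - 4*z^4*u^2 + 4*z^4*u^3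
    - z^4*u^4
    + (-15*z*u + 16*z*u^2 - 4*z*u^3 + 16*z^2*u + 4*z^2*u^2 - 14*z^2*u^3 + 4*z^2*u^4
    - 4*z^3*u - 14*z^3*u^2 + 16*z^3*u^3 - 4*z^3*u^4 + 4*z^4*u^2 - 4*z^4*u^3 + z^4*u^4)) * hss

theorem stmt11 :
    (∀ z : ℂ, ‖z‖ < 1 → ‖b1 z‖ ^ 2 + ‖b2 z‖ ^ 2 ≤ 1) ∧
    (b1 0 = 0 ∧ b2 0 = 0) ∧
    (∀ z w : ℂ, ‖z‖ < 1 → ‖w‖ < 1 →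
      1 - (b1 z * (starRingEnd ℂ) (b1 w) + b2 z * (starRingEnd ℂ) (b2 w))
        = (1 - z * (starRingEnd ℂ) w) * Kker w z) := by
  exact ⟨part1, ⟨by simp [b1], by simp [b2]⟩, part3⟩
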